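/- arXiv:2512.10842 — 4 statements merged into one kernel-verified Lean document; each statement's English description precedes it below -/
import Mathlib

section
/- Let A be a unital C*-algebra, m ≥ 1, and F : A → M_m(ℂ) a linear map. Then φ_F is a state on the C*-algebra M_m(A) if and only if F is completely positive and Tr(F(1_A)) = 1 (i.e., F is a trace channel with respect to the canonical trace Tr on M_m(ℂ)). -/
open scoped ComplexOrder
open Finset

/-- A linear map `F : A → B` is completely positive if for every `n`, applying `F` entrywise
to `M_n(A)` maps positive elements (elements of the form `y⋆ y`) to positive elements. -/
def IsCompletelyPositive {A B : Type*}
    [NonUnitalSemiring A] [StarRing A] [Module ℂ A]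
    [NonUnitalSemiring B] [StarRing B] [Module ℂ B] (F : A →ₗ[ℂ] B) : Prop :=
  ∀ (n : ℕ) (M : Matrix (Fin n) (Fin n) A),
    (∃ Y : Matrix (Fin n) (Fin n) A, M = star Y * Y) →
    ∃ Z : Matrix (Fin n) (Fin n) B, M.map F = star Z * Z

/-- The linear functional `φ_F` on `M_m(A)` given by `φ_F(X) = Σ_{r,s} (F (X r s)) r s`. -/
noncomputable def phiF {A : Type*} [CStarAlgebra A] {m : ℕ}
    (F : A →ₗ[ℂ] Matrix (Fin m) (Fin m) ℂ) : Matrix (Fin m) (Fin m) A →ₗ[ℂ] ℂ where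
  toFun X := ∑ r, ∑ s, F (X r s) r s
  map_add' X Y := by
    simp [Matrix.add_apply, Finset.sum_add_distrib]
  map_smul' c X := by
    simp [Matrix.smul_apply, Finset.mul_sum]

section Aux

variable {A : Type*} [CStarAlgebra A] {m : ℕ} (F : A →ₗ[ℂ] Matrix (Fin m) (Fin m) ℂ)

lemma phiF_apply (X : Matrix (Fin m) (Fin m) A) : phiF F X = ∑ r, ∑ s, F (X r s) r s := rfl

noncomputable def Sform (b c : A) (v w : Fin m → ℂ) : ℂ :=
  ∑ r, ∑ s, (starRingEnd ℂ) (v r) * (F (star b * c) r s * w s)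

lemma sum4_comm {α β : Type*} [Fintype α] [Fintype β] (f : α → α → β → β → ℂ) :
    ∑ r : β, ∑ s : β, ∑ i : α, ∑ j : α, f i j r s
      = ∑ j : α, ∑ i : α, ∑ r : β, ∑ s : β, f i j r s := by
  calc ∑ r : β, ∑ s : β, ∑ i : α, ∑ j : α, f i j r s
      = ∑ r : β, ∑ i : α, ∑ s : β, ∑ j : α, f i j r s :=
        Finset.sum_congr rfl fun r _ => Finset.sum_comm
    _ = ∑ i : α, ∑ r : β, ∑ s : β, ∑ j : α, f i j r s := Finset.sum_comm
    _ = ∑ i : α, ∑ r : β, ∑ j : α, ∑ s : β, f i j r s :=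
        Finset.sum_congr rfl fun i _ => Finset.sum_congr rfl fun r _ => Finset.sum_comm
    _ = ∑ i : α, ∑ j : α, ∑ r : β, ∑ s : β, f i j r s :=
        Finset.sum_congr rfl fun i _ => Finset.sum_comm
    _ = ∑ j : α, ∑ i : α, ∑ r : β, ∑ s : β, f i j r s := Finset.sum_comm

lemma key_pos (hm : 1 ≤ m) (hpos : ∀ X : Matrix (Fin m) (Fin m) A, 0 ≤ phiF F (star X * X))
    {n : ℕ} (a : Fin n → A) (v : Fin n → Fin m → ℂ) :
    0 ≤ ∑ i, ∑ j, Sform F (a i) (a j) (v i) (v j) := by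
  have z : Fin m := ⟨0, hm⟩
  set x : Fin m → A := fun s => ∑ i, v i s • a i with hx
  set X : Matrix (Fin m) (Fin m) A := Matrix.of fun r s => if r = z then x s else 0 with hX
  have h1 : ∀ p q, (star X * X) p q = star (x p) * x q := by
    intro p q
    simp [Matrix.mul_apply, Matrix.star_apply, hX, apply_ite star, ite_mul, mul_ite,
      Finset.sum_ite_eq']
  have h2 : phiF F (star X * X) = ∑ i, ∑ j, Sform F (a i) (a j) (v i) (v j) := by
    rw [phiF_apply]
    simp only [h1, hx]
    simp only [star_sum, star_smul, Finset.sum_mul, Finset.mul_sum, smul_mul_assoc,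
      mul_smul_comm, map_sum, map_smul, Matrix.sum_apply, Matrix.smul_apply, smul_eq_mul]
    simp only [Sform]
    rw [sum4_comm (fun p q r s => v p s * (star (v q r) * F (star (a q) * a p) r s))]
    refine Finset.sum_congr rfl fun i _ => Finset.sum_congr rfl fun j _ =>
      Finset.sum_congr rfl fun r _ => Finset.sum_congr rfl fun s _ => ?_
    simp only [RingHom.coe_coe, starRingEnd_apply]
    ring
  rw [← h2]; exact hpos X

lemma conj_of_nonneg {z : ℂ} (hz : 0 ≤ z) : (starRingEnd ℂ) z = z :=
  Complex.conj_eq_iff_im.2 (Complex.nonneg_iff.mp hz).2.symm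

lemma Sform_self_nonneg (hm : 1 ≤ m)
    (hpos : ∀ X : Matrix (Fin m) (Fin m) A, 0 ≤ phiF F (star X * X))
    (b : A) (v : Fin m → ℂ) : 0 ≤ Sform F b b v v := by
  have := key_pos F hm hpos (fun _ : Fin 1 => b) (fun _ => v)
  simpa using this

lemma Sform_pair_nonneg (hm : 1 ≤ m)
    (hpos : ∀ X : Matrix (Fin m) (Fin m) A, 0 ≤ phiF F (star X * X))
    (b c : A) (v w : Fin m → ℂ) :
    0 ≤ Sform F b b v v + Sform F b c v w + (Sform F c b w v + Sform F c c w w) := by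
  have := key_pos F hm hpos ![b, c] ![v, w]
  simpa [Fin.sum_univ_two] using this

lemma Sform_smul_right (d : ℂ) (b c : A) (v w : Fin m → ℂ) :
    Sform F b (d • c) v w = d * Sform F b c v w := by
  simp only [Sform, mul_smul_comm, map_smul, Matrix.smul_apply, smul_eq_mul, Finset.mul_sum]
  exact Finset.sum_congr rfl fun r _ => Finset.sum_congr rfl fun s _ => by ring

lemma Sform_smul_left (d : ℂ) (b c : A) (v w : Fin m → ℂ) :
    Sform F (d • b) c v w = (starRingEnd ℂ) d * Sform F b c v w := by
  simp only [Sform, star_smul, smul_mul_assoc, map_smul, Matrix.smul_apply, smul_eq_mul,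
    Finset.mul_sum, starRingEnd_apply]
  exact Finset.sum_congr rfl fun r _ => Finset.sum_congr rfl fun s _ => by ring

lemma Sform_conj (hm : 1 ≤ m)
    (hpos : ∀ X : Matrix (Fin m) (Fin m) A, 0 ≤ phiF F (star X * X))
    (b c : A) (v w : Fin m → ℂ) :
    (starRingEnd ℂ) (Sform F b c v w) = Sform F c b w v := by
  set P := Sform F b c v w
  set Q := Sform F c b w v
  have hbb := conj_of_nonneg (Sform_self_nonneg F hm hpos b v)
  have hcc := conj_of_nonneg (Sform_self_nonneg F hm hpos c w)
  have h1 := conj_of_nonneg (Sform_pair_nonneg F hm hpos b c v w)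
  have h2 := conj_of_nonneg (Sform_pair_nonneg F hm hpos b (Complex.I • c) v w)
  rw [Sform_smul_right, Sform_smul_left, Sform_smul_left, Sform_smul_right] at h2
  simp only [map_add, map_mul, map_neg, Complex.conj_I, neg_neg, hbb, hcc] at h1 h2
  have e1 : (starRingEnd ℂ) P + (starRingEnd ℂ) Q = P + Q := by linear_combination h1
  have e2 : -Complex.I * (starRingEnd ℂ) P + Complex.I * (starRingEnd ℂ) Q
      = Complex.I * P - Complex.I * Q := by
    linear_combination h2
  linear_combination e1 / 2 + Complex.I * e2 / 2 +
    (((starRingEnd ℂ) P + P - Q - (starRingEnd ℂ) Q) / 2) * Complex.I_sq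

lemma Sform_single (b c : A) (r s : Fin m) :
    Sform F b c (Pi.single s 1) (Pi.single r 1) = F (star b * c) s r := by
  simp [Sform, Pi.single_apply, apply_ite (starRingEnd ℂ), ite_mul, mul_ite,
    Finset.sum_ite_eq]

lemma F_entry_conj (hm : 1 ≤ m)
    (hpos : ∀ X : Matrix (Fin m) (Fin m) A, 0 ≤ phiF F (star X * X))
    (b c : A) (r s : Fin m) :
    (starRingEnd ℂ) (F (star b * c) s r) = F (star c * b) r s := by
  have h := Sform_conj F hm hpos b c (Pi.single s 1) (Pi.single r 1)
  rwa [Sform_single, Sform_single] at h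

lemma phiF_one : phiF F (1 : Matrix (Fin m) (Fin m) A) = Matrix.trace (F 1) := by
  rw [phiF_apply, Matrix.trace]
  refine Finset.sum_congr rfl fun r _ => ?_
  have : ∀ s : Fin m, F ((1 : Matrix (Fin m) (Fin m) A) r s) r s
      = if s = r then F 1 r r else 0 := by
    intro s
    rcases eq_or_ne s r with h | h
    · subst h; simp [Matrix.one_apply]
    · simp [Matrix.one_apply, Ne.symm h, h]
  rw [Finset.sum_congr rfl fun s _ => this s, Finset.sum_ite_eq' Finset.univ r]
  simp [Matrix.diag]

lemma sum3_comm {α β γ : Type*} [Fintype α] [Fintype β] [Fintype γ] (f : α → β → γ → ℂ) :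
    ∑ p : α, ∑ q : β, ∑ k : γ, f p q k = ∑ k : γ, ∑ p : α, ∑ q : β, f p q k := by
  calc ∑ p : α, ∑ q : β, ∑ k : γ, f p q k
      = ∑ p : α, ∑ k : γ, ∑ q : β, f p q k :=
        Finset.sum_congr rfl fun p _ => Finset.sum_comm
    _ = ∑ k : γ, ∑ p : α, ∑ q : β, f p q k := Finset.sum_comm

lemma key_pos' (hm : 1 ≤ m)
    (hpos : ∀ X : Matrix (Fin m) (Fin m) A, 0 ≤ phiF F (star X * X))
    {n : ℕ} (a : Fin n → A) (x : Fin n × Fin m → ℂ) :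
    0 ≤ ∑ p : Fin n × Fin m, ∑ q : Fin n × Fin m,
      (starRingEnd ℂ) (x p) * (F (star (a p.1) * a q.1) p.2 q.2 * x q) := by
  have h := key_pos F hm hpos a (fun i r => x (i, r))
  have e : ∑ p : Fin n × Fin m, ∑ q : Fin n × Fin m,
      (starRingEnd ℂ) (x p) * (F (star (a p.1) * a q.1) p.2 q.2 * x q)
      = ∑ i, ∑ j, Sform F (a i) (a j) (fun r => x (i, r)) (fun s => x (j, s)) := by
    simp only [Fintype.sum_prod_type, Sform]
    exact Finset.sum_congr rfl fun i _ => Finset.sum_comm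
  rw [e]; exact h

theorem phiF_state_iff_traceChannel'
    (hm : 1 ≤ m) :
    ((∀ X : Matrix (Fin m) (Fin m) A, 0 ≤ phiF F (star X * X)) ∧ phiF F 1 = 1) ↔
      ((∀ (n : ℕ) (M : Matrix (Fin n) (Fin n) A),
        (∃ Y : Matrix (Fin n) (Fin n) A, M = star Y * Y) →
        ∃ Z : Matrix (Fin n) (Fin n) (Matrix (Fin m) (Fin m) ℂ), M.map F = star Z * Z)
        ∧ Matrix.trace (F 1) = 1) := by
  constructor
  · rintro ⟨hpos, hunit⟩
    refine ⟨?_, by rwa [phiF_one] at hunit⟩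
    rintro n M ⟨Y, rfl⟩
    set G : Matrix (Fin n × Fin m) (Fin n × Fin m) ℂ :=
      Matrix.of fun p q => F ((star Y * Y) p.1 q.1) p.2 q.2 with hG
    have hMentry : ∀ i j : Fin n, (star Y * Y) i j = ∑ k, star (Y k i) * Y k j := by
      intro i j; simp [Matrix.mul_apply, Matrix.star_apply]
    have e0 : ∀ p q : Fin n × Fin m, G p q = ∑ k, F (star (Y k p.1) * Y k q.1) p.2 q.2 := by
      intro p q
      rw [hG]
      simp only [Matrix.of_apply]
      rw [hMentry, map_sum, Matrix.sum_apply]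
    have hherm : G.IsHermitian := by
      ext p q
      rw [Matrix.conjTranspose_apply, e0, e0, Complex.star_def, map_sum]
      exact Finset.sum_congr rfl fun k _ => F_entry_conj F hm hpos _ _ _ _
    have hposdef : G.PosSemidef := by
      refine Matrix.PosSemidef.of_dotProduct_mulVec_nonneg hherm fun x => ?_
      have e : dotProduct (star x) (G.mulVec x)
          = ∑ k, ∑ p : Fin n × Fin m, ∑ q : Fin n × Fin m,
              (starRingEnd ℂ) (x p) * (F (star (Y k p.1) * Y k q.1) p.2 q.2 * x q) := by
        rw [← sum3_comm fun p q k =>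
          (starRingEnd ℂ) (x p) * (F (star (Y k p.1) * Y k q.1) p.2 q.2 * x q)]
        simp only [dotProduct, Matrix.mulVec, Pi.star_apply, e0,
          Finset.sum_mul, Finset.mul_sum, Complex.star_def]
      rw [e]
      exact Finset.sum_nonneg fun k _ => key_pos' F hm hpos (fun i => Y k i) x
    obtain ⟨B, hB⟩ : ∃ B : Matrix (Fin n × Fin m) (Fin n × Fin m) ℂ, G = B.conjTranspose * B := by
      open scoped MatrixOrder in
      refine ⟨CFC.sqrt G, ?_⟩
      rw [← Matrix.star_eq_conjTranspose, (CFC.sqrt_nonneg G).isSelfAdjoint.star_eq,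
        CFC.sqrt_mul_sqrt_self G hposdef.nonneg]
    refine ⟨Matrix.of fun i j => Matrix.of fun r s => B (i, r) (j, s), ?_⟩
    ext i j r s
    have hL : (star Y * Y).map F i j r s = G (i, r) (j, s) := by
      rw [Matrix.map_apply, hG]; rfl
    rw [hL, hB]
    simp only [Matrix.mul_apply, Matrix.conjTranspose_apply, Matrix.star_apply,
      Matrix.sum_apply, Matrix.of_apply, Fintype.sum_prod_type, Complex.star_def]
  · rintro ⟨hCP, htr⟩
    refine ⟨?_, by rw [phiF_one, htr]⟩
    intro X
    obtain ⟨Z, hZ⟩ := hCP m (star X * X) ⟨X, rfl⟩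
    have e : phiF F (star X * X)
        = ∑ t, ∑ k, ((starRingEnd ℂ) (∑ r, Z k r t r)) * (∑ s, Z k s t s) := by
      rw [phiF_apply]
      have h1 : ∀ r s : Fin m, F ((star X * X) r s) = (star Z * Z) r s := by
        intro r s
        rw [← Matrix.map_apply (M := star X * X) (f := ⇑F), hZ]
      have h2 : ∀ r s : Fin m, ((star Z * Z) r s) r s
          = ∑ k, ∑ t, (starRingEnd ℂ) (Z k r t r) * Z k s t s := by
        intro r s
        simp [Matrix.mul_apply, Matrix.star_apply, Matrix.sum_apply, Complex.star_def]
      calc ∑ r, ∑ s, F ((star X * X) r s) r s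
          = ∑ r, ∑ s, ∑ k, ∑ t, (starRingEnd ℂ) (Z k r t r) * Z k s t s := by
            refine Finset.sum_congr rfl fun r _ => Finset.sum_congr rfl fun s _ => ?_
            rw [h1, h2]
        _ = ∑ t, ∑ k, ∑ r, ∑ s, (starRingEnd ℂ) (Z k r t r) * Z k s t s :=
            sum4_comm fun k t r s => (starRingEnd ℂ) (Z k r t r) * Z k s t s
        _ = ∑ t, ∑ k, ((starRingEnd ℂ) (∑ r, Z k r t r)) * (∑ s, Z k s t s) := by
            refine Finset.sum_congr rfl fun t _ => Finset.sum_congr rfl fun k _ => ?_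
            rw [map_sum, Finset.sum_mul_sum]
    rw [e]
    refine Finset.sum_nonneg fun t _ => Finset.sum_nonneg fun k _ => ?_
    simpa [Complex.star_def] using star_mul_self_nonneg (∑ s, Z k s t s)

end Aux

/-- Let `A` be a unital C*-algebra, `m ≥ 1` and `F : A → M_m(ℂ)` a linear
map.  Then `φ_F` is a state on `M_m(A)` if and only if `F` is completely positive and
`Tr (F 1) = 1`, i.e. `F` is a trace channel with respect to the canonical trace on `M_m(ℂ)`. -/
theorem phiF_state_iff_traceChannel
    (A : Type*) [CStarAlgebra A] (m : ℕ) (hm : 1 ≤ m)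
    (F : A →ₗ[ℂ] Matrix (Fin m) (Fin m) ℂ) :
    ((∀ X : Matrix (Fin m) (Fin m) A, 0 ≤ phiF F (star X * X)) ∧ phiF F 1 = 1) ↔
      (IsCompletelyPositive F ∧ Matrix.trace (F 1) = 1) := by
  exact phiF_state_iff_traceChannel' F hm
end

section
/- Let A and B be unital C*-algebras with faithful traces τ_A and τ_B. Suppose F ∈ TC_{τ_B}(A,B) and F# : B → A is a linear map satisfying τ_B(F(a) b) = τ_A(a F#(b)) for all a ∈ A and b ∈ B. Then F# ∈ TC_{τ_A}(B,A), and ω_{τ_A}(F#) = ω_{τ_B}(F) ∘ Σᵒᵖ, where Σᵒᵖ : B ⊗ Aᵐᵒᵖ → A ⊗ Bᵐᵒᵖ is the linear isomorphism of algebraic tensor products determined by b ⊗ aᵒᵖ ↦ a ⊗ bᵒᵖ. -/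
open scoped TensorProduct ComplexOrder
open MulOpposite

/-- The Choi–Jamiolkowski functional `ω_τ(H)` on the algebraic tensor product `A ⊗ Cᵐᵒᵖ`,
determined by `ω_τ(H)(a ⊗ cᵒᵖ) = τ (H a * c)`. -/
noncomputable def omega {A C : Type*} [AddCommGroup A] [Module ℂ A]
    [NonUnitalSemiring C] [Module ℂ C] [SMulCommClass ℂ C C] [IsScalarTower ℂ C C]
    (τ : C →ₗ[ℂ] ℂ) (H : A →ₗ[ℂ] C) : A ⊗[ℂ] Cᵐᵒᵖ →ₗ[ℂ] ℂ :=
  τ ∘ₗ (LinearMap.mul' ℂ C) ∘ₗ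
    (TensorProduct.map H ((opLinearEquiv ℂ (M := C)).symm.toLinearMap))

/-- The flip map `Σᵒᵖ : B ⊗ Aᵐᵒᵖ → A ⊗ Bᵐᵒᵖ` determined by `b ⊗ aᵒᵖ ↦ a ⊗ bᵒᵖ`. -/
noncomputable def sigmaOp (A B : Type*) [AddCommGroup A] [Module ℂ A]
    [AddCommGroup B] [Module ℂ B] : B ⊗[ℂ] Aᵐᵒᵖ →ₗ[ℂ] A ⊗[ℂ] Bᵐᵒᵖ :=
  TensorProduct.lift <| LinearMap.mk₂ ℂ (fun (b : B) (a : Aᵐᵒᵖ) => a.unop ⊗ₜ[ℂ] op b)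
    (fun b₁ b₂ a => by simp [TensorProduct.tmul_add])
    (fun c b a => by simp [TensorProduct.tmul_smul])
    (fun b a₁ a₂ => by simp [TensorProduct.add_tmul])
    (fun c b a => by simp [TensorProduct.smul_tmul'])


-- ## Auxiliary development

open WithCStarModule
open scoped InnerProductSpace NNReal


section Generic

variable {A : Type*} [CStarAlgebra A]

lemma nonneg_factor' [PartialOrder A] [StarOrderedRing A] {a : A} (ha : 0 ≤ a) :
    ∃ c : A, a = star c * c := by
  refine ⟨CFC.sqrt a, ?_⟩
  have h1 : IsSelfAdjoint (CFC.sqrt a) := (CFC.sqrt_nonneg (a := a)).isSelfAdjoint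
  rw [h1.star_eq, CFC.sqrt_mul_sqrt_self a ha]

lemma star_sq_decomp (a : A) :
    ∃ p q r s : A, a = (star p * p - star q * q) + Complex.I • (star r * r - star s * s) := by
  letI := CStarAlgebra.spectralOrder A
  haveI := CStarAlgebra.spectralOrderedRing A
  set x : A := (2 : ℂ)⁻¹ • (a + star a) with hx
  set y : A := -((2 : ℂ)⁻¹ • (Complex.I • (a - star a))) with hy
  have hxsa : IsSelfAdjoint x := by
    rw [IsSelfAdjoint, hx, star_smul, star_add, star_star]
    simp only [Complex.star_def, map_inv₀, Complex.conj_ofNat]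
    rw [add_comm]
  have hysa : IsSelfAdjoint y := by
    rw [IsSelfAdjoint, hy, star_neg, star_smul, star_smul, star_sub, star_star]
    simp only [Complex.star_def, map_inv₀, Complex.conj_ofNat, Complex.conj_I]
    match_scalars <;> ring
  have hdecomp : a = x + Complex.I • y := by
    rw [hx, hy]
    match_scalars <;> field_simp <;> rw [Complex.I_sq] <;> ring
  obtain ⟨p, hp⟩ := nonneg_factor' (CFC.posPart_nonneg x)
  obtain ⟨q, hq⟩ := nonneg_factor' (CFC.negPart_nonneg x)
  obtain ⟨r, hr⟩ := nonneg_factor' (CFC.posPart_nonneg y)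
  obtain ⟨s, hs⟩ := nonneg_factor' (CFC.negPart_nonneg y)
  exact ⟨p, q, r, s, by
    rw [← hp, ← hq, ← hr, ← hs, CFC.posPart_sub_negPart x hxsa, CFC.posPart_sub_negPart y hysa,
      hdecomp]⟩

variable {τ : A →ₗ[ℂ] ℂ}

lemma tau_star (hτ_pos : ∀ a : A, 0 ≤ τ (star a * a)) (a : A) :
    τ (star a) = starRingEnd ℂ (τ a) := by
  have key : ∀ c : A, starRingEnd ℂ (τ (star c * c)) = τ (star c * c) := fun c => by
    rw [Complex.conj_eq_iff_im]; exact ((Complex.le_def.mp (hτ_pos c)).2).symm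
  obtain ⟨p, q, r, s, hdec⟩ := star_sq_decomp a
  set u : A := star p * p - star q * q with hu
  set v : A := star r * r - star s * s with hv
  have husa : star u = u := by rw [hu, star_sub]; simp [star_mul, star_star]
  have hvsa : star v = v := by rw [hv, star_sub]; simp [star_mul, star_star]
  have hureal : starRingEnd ℂ (τ u) = τ u := by simp only [hu, map_sub]; rw [key, key]
  have hvreal : starRingEnd ℂ (τ v) = τ v := by simp only [hv, map_sub]; rw [key, key]
  have hstar : star a = u - Complex.I • v := by
    rw [hdec, star_add, star_smul, husa, hvsa, Complex.star_def, Complex.conj_I, neg_smul,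
      ← sub_eq_add_neg]
  rw [hstar, hdec, map_sub, map_add, map_smul]
  simp only [smul_eq_mul, map_add, map_mul, Complex.conj_I, hureal, hvreal]
  ring

lemma tau_sep (hτ_faithful : ∀ a : A, τ (star a * a) = 0 → a = 0)
    {x : A} (h : ∀ a : A, τ (a * x) = 0) : x = 0 :=
  hτ_faithful x (h (star x))

end Generic


section Factor

variable {M : Type*} [CStarAlgebra M]

lemma nonneg_factor'' [PartialOrder M] [StarOrderedRing M] {a : M} (ha : 0 ≤ a) :
    ∃ c : M, a = star c * c := by
  refine ⟨CFC.sqrt a, ?_⟩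
  have h1 : IsSelfAdjoint (CFC.sqrt a) := (CFC.sqrt_nonneg (a := a)).isSelfAdjoint
  rw [h1.star_eq, CFC.sqrt_mul_sqrt_self a ha]

lemma exists_factor_of_trace_pos (σ : M →ₗ[ℂ] ℂ)
    (hpos : ∀ w : M, 0 ≤ σ (star w * w)) (hfaith : ∀ w : M, σ (star w * w) = 0 → w = 0)
    {N : M} (hN : star N = N) (h : ∀ w : M, 0 ≤ σ (N * (star w * w))) :
    ∃ z : M, N = star z * z := by
  letI := CStarAlgebra.spectralOrder M
  haveI := CStarAlgebra.spectralOrderedRing M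
  have hNsa : IsSelfAdjoint N := hN
  obtain ⟨c, hc⟩ := nonneg_factor'' (CFC.negPart_nonneg N)
  have h1 := h c
  rw [← hc] at h1
  have hmul : N * N⁻ = -(N⁻ * N⁻) := by
    nth_rewrite 1 [← CFC.posPart_sub_negPart N hNsa]
    rw [sub_mul, CFC.posPart_mul_negPart, zero_sub]
  have hsneg : star (N⁻) = N⁻ :=
    (CFC.negPart_nonneg N).isSelfAdjoint.star_eq
  have h2 : σ (star (N⁻) * N⁻) = 0 := by
    refine le_antisymm ?_ (hpos _)
    rw [hmul, map_neg] at h1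
    rw [hsneg]
    exact neg_nonneg.mp h1
  have h3 : N⁻ = 0 := hfaith _ h2
  have h4 : N = N⁺ := by
    nth_rewrite 1 [← CFC.posPart_sub_negPart N hNsa]
    rw [h3, sub_zero]
  exact nonneg_factor'' (h4 ▸ CFC.posPart_nonneg N)

end Factor


section MatrixDev
open Matrix

/-- Type synonym for matrices over a C*-algebra, on which we install a C*-norm. -/
def CSM (n : ℕ) (A : Type*) : Type _ := Matrix (Fin n) (Fin n) A

/-- The C*-module `Fin n → A`. -/
abbrev Evec (n : ℕ) (A : Type*) : Type _ := WithCStarModule A (Fin n → A)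

namespace CSM

variable {A : Type*} [CStarAlgebra A] {n : ℕ}

instance : Ring (CSM n A) := inferInstanceAs (Ring (Matrix (Fin n) (Fin n) A))
instance : StarRing (CSM n A) := inferInstanceAs (StarRing (Matrix (Fin n) (Fin n) A))
instance : Algebra ℂ (CSM n A) := inferInstanceAs (Algebra ℂ (Matrix (Fin n) (Fin n) A))
instance : StarModule ℂ (CSM n A) :=
  inferInstanceAs (StarModule ℂ (Matrix (Fin n) (Fin n) A))

section WithOrder

variable [PartialOrder A] [StarOrderedRing A]



/-- Entrywise linear equivalence with the pi type. -/
def toPi : CSM n A ≃ₗ[ℂ] (Fin n → Fin n → A) where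
  toFun M i j := (M : Matrix (Fin n) (Fin n) A) i j
  invFun f := (f : Matrix (Fin n) (Fin n) A)
  map_add' _ _ := rfl
  map_smul' := by intro c M; funext i j; rfl
  left_inv _ := rfl
  right_inv _ := rfl

noncomputable instance : CStarAlgebra (CSM n A) :=
  inferInstanceAs (CStarAlgebra (CStarMatrix (Fin n) (Fin n) A))

end WithOrder

end CSM

end MatrixDev


section MatTrace

variable {A : Type*} [CStarAlgebra A] {n : ℕ}

/-- the (unnormalized) trace functional on matrices induced by `τ`. -/
noncomputable def matTrace (τ : A →ₗ[ℂ] ℂ) : Matrix (Fin n) (Fin n) A →ₗ[ℂ] ℂ where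
  toFun M := ∑ i, τ (M i i)
  map_add' M N := by simp [Matrix.add_apply, Finset.sum_add_distrib]
  map_smul' c M := by simp [Matrix.smul_apply, Finset.mul_sum]

lemma matTrace_apply (τ : A →ₗ[ℂ] ℂ) (M : Matrix (Fin n) (Fin n) A) :
    matTrace τ M = ∑ i, τ (M i i) := rfl

lemma matTrace_mul_comm (τ : A →ₗ[ℂ] ℂ) (htr : ∀ a b : A, τ (a * b) = τ (b * a))
    (X Y : Matrix (Fin n) (Fin n) A) : matTrace τ (X * Y) = matTrace τ (Y * X) := by
  simp only [matTrace_apply, Matrix.mul_apply, map_sum]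
  rw [Finset.sum_comm]
  exact Finset.sum_congr rfl fun i _ => Finset.sum_congr rfl fun j _ => htr _ _

lemma matTrace_star_mul_self (τ : A →ₗ[ℂ] ℂ) (W : Matrix (Fin n) (Fin n) A) :
    matTrace τ (star W * W) = ∑ i, ∑ k, τ (star (W k i) * W k i) := by
  simp only [matTrace_apply, Matrix.mul_apply, map_sum]
  exact Finset.sum_congr rfl fun i _ => Finset.sum_congr rfl fun k _ => by
    rw [Matrix.star_apply]

lemma matTrace_pos (τ : A →ₗ[ℂ] ℂ) (hpos : ∀ a : A, 0 ≤ τ (star a * a))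
    (W : Matrix (Fin n) (Fin n) A) : 0 ≤ matTrace τ (star W * W) := by
  rw [matTrace_star_mul_self]
  exact Finset.sum_nonneg fun i _ => Finset.sum_nonneg fun k _ => hpos _

lemma matTrace_faithful (τ : A →ₗ[ℂ] ℂ) (hpos : ∀ a : A, 0 ≤ τ (star a * a))
    (hfaith : ∀ a : A, τ (star a * a) = 0 → a = 0)
    (W : Matrix (Fin n) (Fin n) A) (h : matTrace τ (star W * W) = 0) : W = 0 := by
  rw [matTrace_star_mul_self] at h
  have h1 := (Finset.sum_eq_zero_iff_of_nonneg
    (fun i _ => Finset.sum_nonneg fun k _ => hpos (W k i))).mp h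
  ext k i
  have h2 := (Finset.sum_eq_zero_iff_of_nonneg (fun k _ => hpos (W k i))).mp
    (h1 i (Finset.mem_univ i)) k (Finset.mem_univ k)
  exact (by simpa using hfaith _ h2 : W k i = 0)

end MatTrace

section CPStar

variable {A B : Type*} [CStarAlgebra A] [CStarAlgebra B]

lemma cp_apply_star_mul (F : A →ₗ[ℂ] B) (hF : IsCompletelyPositive F) (c : A) :
    ∃ z : B, F (star c * c) = star z * z := by
  obtain ⟨Z, hZ⟩ := hF 1 (Matrix.of fun _ _ => star c * c)
    ⟨Matrix.of fun _ _ => c, by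
      ext i j
      simp [Matrix.mul_apply, Matrix.star_apply, Fin.sum_univ_one]⟩
  refine ⟨Z 0 0, ?_⟩
  have h := congrFun (congrFun hZ 0) 0
  simpa [Matrix.map_apply, Matrix.mul_apply, Matrix.star_apply, Fin.sum_univ_one] using h

lemma cp_star (F : A →ₗ[ℂ] B) (hF : IsCompletelyPositive F) (a : A) :
    F (star a) = star (F a) := by
  obtain ⟨p, q, r, s, hdec⟩ := star_sq_decomp a
  have sap : ∀ c : A, star (F (star c * c)) = F (star c * c) := fun c => by
    obtain ⟨z, hz⟩ := cp_apply_star_mul F hF c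
    rw [hz, star_mul, star_star]
  have hstar : star a = (star p * p - star q * q)
      - Complex.I • (star r * r - star s * s) := by
    rw [hdec, star_add, star_smul, star_sub, star_sub]
    simp only [star_mul, star_star, Complex.star_def, Complex.conj_I]
    rw [neg_smul, ← sub_eq_add_neg]
  rw [hstar, hdec]
  simp only [map_sub, map_add, map_smul]
  rw [star_add, star_sub, star_smul, star_sub]
  simp only [Complex.star_def, Complex.conj_I, sap]
  rw [neg_smul, ← sub_eq_add_neg]

end CPStar

section TraceCSM

variable {A : Type*} [CStarAlgebra A] {n : ℕ}

/-- `matTrace` as a linear functional on the type synonym `CSM`. -/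
noncomputable def matTraceCSM (τ : A →ₗ[ℂ] ℂ) : CSM n A →ₗ[ℂ] ℂ where
  toFun M := matTrace τ (M : Matrix (Fin n) (Fin n) A)
  map_add' x y := (matTrace τ).map_add x y
  map_smul' c x := (matTrace τ).map_smul c x

end TraceCSM

/-- Let `A`, `B` be unital C*-algebras with faithful traces `τ_A`, `τ_B`.
If `F ∈ TC_{τ_B}(A,B)` and `F# : B → A` satisfies `τ_B (F a * b) = τ_A (a * F# b)` for all
`a, b`, then `F# ∈ TC_{τ_A}(B,A)` and `ω_{τ_A}(F#) = ω_{τ_B}(F) ∘ Σᵒᵖ`. -/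
theorem adjoint_traceChannel
    (A B : Type*) [CStarAlgebra A] [CStarAlgebra B]
    (τA : A →ₗ[ℂ] ℂ) (hτA_ne : τA ≠ 0)
    (hτA_pos : ∀ a : A, 0 ≤ τA (star a * a))
    (hτA_tracial : ∀ a₁ a₂ : A, τA (a₁ * a₂) = τA (a₂ * a₁))
    (hτA_faithful : ∀ a : A, τA (star a * a) = 0 → a = 0)
    (τB : B →ₗ[ℂ] ℂ) (hτB_ne : τB ≠ 0)
    (hτB_pos : ∀ b : B, 0 ≤ τB (star b * b))
    (hτB_tracial : ∀ b₁ b₂ : B, τB (b₁ * b₂) = τB (b₂ * b₁))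
    (hτB_faithful : ∀ b : B, τB (star b * b) = 0 → b = 0)
    (F : A →ₗ[ℂ] B) (hF_cp : IsCompletelyPositive F) (hF_tr : τB (F 1) = 1)
    (Fsharp : B →ₗ[ℂ] A)
    (h_adj : ∀ (a : A) (b : B), τB (F a * b) = τA (a * Fsharp b)) :
    (IsCompletelyPositive Fsharp ∧ τA (Fsharp 1) = 1) ∧
      omega τA Fsharp = (omega τB F) ∘ₗ sigmaOp A B := by

  -- `Fsharp` is star-preserving
  have hF_star : ∀ a : A, F (star a) = star (F a) := cp_star F hF_cp
  have hFs_star : ∀ b : B, Fsharp (star b) = star (Fsharp b) := by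
    intro b
    have hsep : ∀ a : A, τA (a * (Fsharp (star b) - star (Fsharp b))) = 0 := by
      intro a
      have e1 : τA (a * Fsharp (star b)) = τB (F a * star b) := (h_adj a (star b)).symm
      have e2 : τA (a * star (Fsharp b)) = starRingEnd ℂ (τB (star (F a) * b)) := by
        have w1 : τA (star (Fsharp b * star a)) = starRingEnd ℂ (τA (Fsharp b * star a)) :=
          tau_star hτA_pos _
        rw [star_mul, star_star] at w1
        rw [w1, hτA_tracial, ← h_adj (star a) b, hF_star a]
      have e3 : τB (F a * star b) = starRingEnd ℂ (τB (star (F a) * b)) := by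
        have w2 : τB (star (b * star (F a))) = starRingEnd ℂ (τB (b * star (F a))) :=
          tau_star hτB_pos _
        rw [star_mul, star_star] at w2
        rw [w2, hτB_tracial]
      rw [mul_sub, map_sub, e1, e2, e3, sub_self]
    have h0 := tau_sep hτA_faithful hsep
    exact sub_eq_zero.mp h0
  refine ⟨⟨?_, ?_⟩, ?_⟩
  · -- complete positivity of `Fsharp`
    intro n M hM
    obtain ⟨Y, hY⟩ := hM
    letI := CStarAlgebra.spectralOrder A
    haveI := CStarAlgebra.spectralOrderedRing A
    have hMsa : star M = M := by rw [hY, star_mul, star_star]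
    set N : Matrix (Fin n) (Fin n) A := M.map Fsharp with hN
    have hNsa : star N = N := by
      ext i j
      rw [Matrix.star_apply, hN, Matrix.map_apply, Matrix.map_apply, ← hFs_star,
        ← Matrix.star_apply, hMsa]
    have hpos : ∀ W : Matrix (Fin n) (Fin n) A, 0 ≤ matTrace τA (N * (star W * W)) := by
      intro W
      set P : Matrix (Fin n) (Fin n) A := star W * W with hP
      obtain ⟨Z, hZ⟩ := hF_cp n P ⟨W, rfl⟩
      have key : matTrace τA (N * P) = matTrace τB ((P.map F) * M) := by
        rw [matTrace_apply, matTrace_apply]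
        simp only [Matrix.mul_apply, map_sum, Matrix.map_apply]
        rw [Finset.sum_comm]
        refine Finset.sum_congr rfl fun j _ => Finset.sum_congr rfl fun i _ => ?_
        rw [hN, Matrix.map_apply, hτA_tracial, ← h_adj]
      rw [key, hZ, hY]
      have assoc1 : (star Z * Z) * (star Y * Y)
          = (star Z * Z * star Y) * Y := by simp only [mul_assoc]
      rw [assoc1, matTrace_mul_comm τB hτB_tracial]
      have assoc2 : Y * (star Z * Z * star Y) = star (Z * star Y) * (Z * star Y) := by
        rw [star_mul, star_star]
        simp only [mul_assoc]
      rw [assoc2]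
      exact matTrace_pos τB hτB_pos _
    have hres := exists_factor_of_trace_pos (M := CSM n A) (matTraceCSM τA)
      (fun w => matTrace_pos τA hτA_pos w)
      (fun w hw => matTrace_faithful τA hτA_pos hτA_faithful w hw)
      (N := N) hNsa (fun w => hpos w)
    obtain ⟨z, hz⟩ := hres
    exact ⟨z, hz⟩
  · -- normalization
    have h := h_adj 1 1
    rw [mul_one, one_mul] at h
    rw [← h, hF_tr]
  · -- the Choi-functional identity
    apply TensorProduct.ext'
    intro b aop
    simp only [omega, sigmaOp, LinearMap.coe_comp, Function.comp_apply,
      TensorProduct.map_tmul, LinearMap.mul'_apply, TensorProduct.lift.tmul,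
      LinearMap.mk₂_apply, LinearEquiv.coe_coe, coe_opLinearEquiv_symm, unop_op]
    rw [hτA_tracial, ← h_adj]
    rfl
end

section
/- Let A be a unital C*-algebra and n ≥ 1. Let L be a [0,∞]-valued seminorm on A and K a [0,∞]-valued seminorm on M_n(A). Assume: (1) for every state ψ on M_n(ℂ) and every X ∈ M_n(A), L((ψ ⊗ id)(X)) ≤ K(X); (2) for every x ∈ A with L(x) ≤ 1, one has K(x · 1_n) ≤ 1, where x · 1_n ∈ M_n(A) is the diagonal matrix with every diagonal entry equal to x. Then for all states φ₁, φ₂ on A and every state ψ on M_n(ℂ): mk_L(φ₁, φ₂) = mk_K(ψ ⊗ φ₁, ψ ⊗ φ₂). -/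
open scoped ComplexOrder ENNReal
open Finset

/-- A state on a unital complex *-algebra: a positive unital linear functional. -/
def IsState {D : Type*} [Ring D] [StarRing D] [Module ℂ D] (φ : D →ₗ[ℂ] ℂ) : Prop :=
  (∀ d : D, 0 ≤ φ (star d * d)) ∧ φ 1 = 1

/-- The Monge–Kantorovič distance associated to a `[0,∞]`-valued seminorm `L`:
`mk_L(φ, ψ) = sup { |φ x − ψ x| : L x ≤ 1 }`. -/
noncomputable def mkDist {V : Type*} (L : V → ℝ≥0∞) (φ ψ : V → ℂ) : ℝ≥0∞ :=
  ⨆ (x : V) (_ : L x ≤ 1), (‖φ x - ψ x‖₊ : ℝ≥0∞)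

/-- Let `A` be a unital C*-algebra and `n ≥ 1`.  Let `L` be a
`[0,∞]`-valued seminorm on `A` and `K` one on `M_n(A)` such that
(1) `L((ψ ⊗ id)(X)) ≤ K(X)` for every state `ψ` on `M_n(ℂ)` and `X ∈ M_n(A)`, and
(2) `K(x·1_n) ≤ 1` whenever `L(x) ≤ 1`.
Then for all states `φ₁, φ₂` on `A` and every state `ψ` on `M_n(ℂ)`:
`mk_L(φ₁, φ₂) = mk_K(ψ ⊗ φ₁, ψ ⊗ φ₂)`. -/
theorem mk_eq_of_slice_conditions
    (A : Type*) [CStarAlgebra A] (n : ℕ) (hn : 1 ≤ n)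
    (L : A → ℝ≥0∞)
    (hL_add : ∀ x y : A, L (x + y) ≤ L x + L y)
    (hL_smul : ∀ (c : ℂ), c ≠ 0 → ∀ x : A, L (c • x) = (‖c‖₊ : ℝ≥0∞) * L x)
    (K : Matrix (Fin n) (Fin n) A → ℝ≥0∞)
    (hK_add : ∀ X Y : Matrix (Fin n) (Fin n) A, K (X + Y) ≤ K X + K Y)
    (hK_smul : ∀ (c : ℂ), c ≠ 0 → ∀ X : Matrix (Fin n) (Fin n) A,
      K (c • X) = (‖c‖₊ : ℝ≥0∞) * K X)
    (h1 : ∀ (ψ : Matrix (Fin n) (Fin n) ℂ →ₗ[ℂ] ℂ), IsState ψ →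
      ∀ X : Matrix (Fin n) (Fin n) A,
        L (∑ i, ∑ j, ψ (Matrix.single i j 1) • X i j) ≤ K X)
    (h2 : ∀ x : A, L x ≤ 1 → K (Matrix.diagonal (fun _ => x)) ≤ 1)
    (φ₁ φ₂ : A →ₗ[ℂ] ℂ) (hφ₁ : IsState φ₁) (hφ₂ : IsState φ₂)
    (ψ : Matrix (Fin n) (Fin n) ℂ →ₗ[ℂ] ℂ) (hψ : IsState ψ) :
    mkDist L φ₁ φ₂ =
      mkDist K
        (fun X => ∑ i, ∑ j, ψ (Matrix.single i j 1) * φ₁ (X i j))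
        (fun X => ∑ i, ∑ j, ψ (Matrix.single i j 1) * φ₂ (X i j)) := by

  have hone : (∑ i : Fin n, Matrix.single i i (1:ℂ)) = 1 := by
    ext a b
    rw [Matrix.sum_apply]
    by_cases h : a = b
    · subst h; simp [Matrix.single, Matrix.one_apply]
    · rw [Matrix.one_apply_ne h, Finset.sum_eq_zero]
      intro x _
      simp only [Matrix.single, Matrix.of_apply, ite_eq_right_iff, and_imp]
      rintro rfl rfl; exact absurd rfl h
  have hdiag : ∀ (φ : A →ₗ[ℂ] ℂ) (x : A),
      (∑ i, ∑ j, ψ (Matrix.single i j 1) * φ (Matrix.diagonal (fun _ => x) i j))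
        = φ x := by
    intro φ x
    have : ∀ i : Fin n, (∑ j, ψ (Matrix.single i j 1) *
        φ (Matrix.diagonal (fun _ => x) i j)) = ψ (Matrix.single i i 1) * φ x := by
      intro i
      rw [Finset.sum_eq_single i]
      · simp
      · intro j _ hj
        simp [Matrix.diagonal_apply, Ne.symm hj]
      · simp
    simp only [this, ← Finset.sum_mul, ← map_sum, hone, hψ.2, one_mul]
  have hslice : ∀ (φ : A →ₗ[ℂ] ℂ) (X : Matrix (Fin n) (Fin n) A),
      φ (∑ i, ∑ j, ψ (Matrix.single i j 1) • X i j)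
        = ∑ i, ∑ j, ψ (Matrix.single i j 1) * φ (X i j) := by
    intro φ X
    simp [map_sum, map_smul, smul_eq_mul]
  unfold mkDist
  apply le_antisymm
  · refine iSup₂_le fun x hx => ?_
    refine le_iSup₂_of_le (Matrix.diagonal (fun _ => x)) (h2 x hx) (le_of_eq ?_)
    beta_reduce
    rw [hdiag φ₁ x, hdiag φ₂ x]
  · refine iSup₂_le fun X hX => ?_
    refine le_iSup₂_of_le (∑ i, ∑ j, ψ (Matrix.single i j 1) • X i j)
      ((h1 ψ hψ X).trans hX) (le_of_eq ?_)
    beta_reduce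
    rw [hslice φ₁ X, hslice φ₂ X]
end

section
/- Let A and B be unital C*-algebras, m ≥ 1, and let L_A, L_B, L_M be [0,∞]-valued seminorms on A, B, and M_m(ℂ) respectively. Define the induced seminorm 𝕃_A on M_m(A) by 𝕃_A(X) := sup{ L_A(Σ_{r,s} ψ(E_{rs}) • X r s) : ψ a state on M_m(ℂ) } + sup{ L_M( (r,s) ↦ φ(X s r) ) : φ a state on A }, and define 𝕃_B on M_m(B) by the same formula with L_B in place of L_A and states on B in the second supremum. If F : A → B is a unital completely positive map with L_B(F(a)) ≤ L_A(a) for all a ∈ A, then 𝕃_B((F applied entrywise)(X)) ≤ 𝕃_A(X) for every X ∈ M_m(A). -/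
open scoped ComplexOrder ENNReal
open Finset
set_option maxHeartbeats 1000000

/-- The induced tensor seminorm `𝕃_A` on `M_m(A)`:
`𝕃_A(X) = sup_{ψ ∈ S(M_m(ℂ))} L_A(Σ_{r,s} ψ(E_{rs}) • X r s)
          + sup_{φ ∈ S(A)} L_M((r,s) ↦ φ (X s r))`. -/
noncomputable def inducedSeminorm {A : Type*} [Ring A] [StarRing A] [Module ℂ A] {m : ℕ}
    (LA : A → ℝ≥0∞) (LM : Matrix (Fin m) (Fin m) ℂ → ℝ≥0∞) :
    Matrix (Fin m) (Fin m) A → ℝ≥0∞ := fun X =>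
  (⨆ (ψ : Matrix (Fin m) (Fin m) ℂ →ₗ[ℂ] ℂ) (_ : IsState ψ),
      LA (∑ r, ∑ s, ψ (Matrix.single r s 1) • X r s)) +
    (⨆ (φ : A →ₗ[ℂ] ℂ) (_ : IsState φ), LM (Matrix.of fun r s => φ (X s r)))

/-- Let `A`, `B` be unital C*-algebras, `m ≥ 1`, and `L_A, L_B, L_M`
`[0,∞]`-valued seminorms on `A`, `B`, `M_m(ℂ)`.  If `F : A → B` is unital completely
positive with `L_B (F a) ≤ L_A a` for all `a`, then the induced seminorms satisfy
`𝕃_B(F(X)) ≤ 𝕃_A(X)` for every `X ∈ M_m(A)` (entrywise application of `F`). -/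
theorem inducedSeminorm_entrywise_le
    (A B : Type*) [CStarAlgebra A] [CStarAlgebra B] (m : ℕ) (hm : 1 ≤ m)
    (LA : A → ℝ≥0∞)
    (hLA_add : ∀ x y : A, LA (x + y) ≤ LA x + LA y)
    (hLA_smul : ∀ (c : ℂ), c ≠ 0 → ∀ x : A, LA (c • x) = (‖c‖₊ : ℝ≥0∞) * LA x)
    (LB : B → ℝ≥0∞)
    (hLB_add : ∀ x y : B, LB (x + y) ≤ LB x + LB y)
    (hLB_smul : ∀ (c : ℂ), c ≠ 0 → ∀ x : B, LB (c • x) = (‖c‖₊ : ℝ≥0∞) * LB x)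
    (LM : Matrix (Fin m) (Fin m) ℂ → ℝ≥0∞)
    (hLM_add : ∀ x y : Matrix (Fin m) (Fin m) ℂ, LM (x + y) ≤ LM x + LM y)
    (hLM_smul : ∀ (c : ℂ), c ≠ 0 → ∀ x : Matrix (Fin m) (Fin m) ℂ,
      LM (c • x) = (‖c‖₊ : ℝ≥0∞) * LM x)
    (F : A →ₗ[ℂ] B) (hF_cp : IsCompletelyPositive F) (hF_unital : F 1 = 1)
    (hF_lip : ∀ a : A, LB (F a) ≤ LA a)
    (X : Matrix (Fin m) (Fin m) A) :
    inducedSeminorm LB LM (X.map F) ≤ inducedSeminorm LA LM X := by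
  unfold inducedSeminorm
  gcongr ?_ + ?_
  case h₁ =>
    refine iSup₂_le fun ψ hψ => ?_
    refine le_iSup₂_of_le ψ hψ ?_
    have : (∑ r, ∑ s, ψ (Matrix.single r s 1) • (X.map F) r s)
        = F (∑ r, ∑ s, ψ (Matrix.single r s 1) • X r s) := by
      simp [map_sum, Matrix.map_apply]
    rw [this]
    exact hF_lip _
  case h₂ =>
    refine iSup₂_le fun φ hφ => ?_
    have hstate : IsState (φ.comp F) := by
      constructor
      · intro d
        obtain ⟨Z, hZ⟩ := hF_cp 1 (Matrix.of fun _ _ => star d * d)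
          ⟨Matrix.of fun _ _ => d, by
            ext i j
            simp [Matrix.mul_apply, Matrix.conjTranspose_apply]⟩
        have h00 := congrFun (congrFun hZ 0) 0
        simp only [Matrix.map_apply, Matrix.of_apply, Matrix.mul_apply,
          Matrix.star_apply, Fin.sum_univ_one] at h00
        simp only [LinearMap.comp_apply]
        rw [h00]
        exact hφ.1 (Z 0 0)
      · simpa [hF_unital] using hφ.2
    refine le_iSup₂_of_le (φ.comp F) hstate ?_
    have : (Matrix.of fun r s => φ ((X.map F) s r))
        = (Matrix.of fun r s => (φ.comp F) (X s r)) := by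
      ext r s; simp [Matrix.map_apply]
    rw [this]
end
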